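/- (Supercritical direction of the main theorem.) Let, for each n ≥ 2, scores z_{n,1},…,z_{n,n} be given with Λ_n < ∞ for all sufficiently large n, and let (β_n) be a positive deterministic sequence with β_n/Λ_n → ∞ as n → ∞. Then Z_n(β_n) → 1 and the Shannon entropy satisfies H_n(β_n) → 0. -/

import Mathlib

open Filter MeasureTheory
open scoped ENNReal

/-- Maximum score `z_n^*`. -/
noncomputable def zmax (n : ℕ) (z : Fin n → ℝ) : ℝ := sSup (Set.range z)

/-- Gap `g_{n,j} = z_n^* - z_{n,j}`. -/
noncomputable def gap (n : ℕ) (z : Fin n → ℝ) (j : Fin n) : ℝ := zmax n z - z j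

/-- Cumulative gap-counting function `N_n(t)`. -/
noncomputable def Ncount (n : ℕ) (z : Fin n → ℝ) (t : ℝ) : ℕ :=
  {j : Fin n | gap n z j ≤ t}.ncard

/-- Normalised partition function `Z_n(β)`. -/
noncomputable def Zfun (n : ℕ) (z : Fin n → ℝ) (β : ℝ) : ℝ :=
  ∑ j : Fin n, Real.exp (-(β * gap n z j))

/-- Softmax probabilities `p_{n,j}(β)`. -/
noncomputable def softmaxP (n : ℕ) (z : Fin n → ℝ) (β : ℝ) (j : Fin n) : ℝ :=
  Real.exp (β * z j) / ∑ ℓ : Fin n, Real.exp (β * z ℓ)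

/-- Shannon entropy `H_n(β)`. -/
noncomputable def entropyH (n : ℕ) (z : Fin n → ℝ) (β : ℝ) : ℝ :=
  -∑ j : Fin n, softmaxP n z β j * Real.log (softmaxP n z β j)

/-- The set of values `log N_n(t) / t` over `t > 0`, whose supremum is `Λ_n`. -/
def lamSet (n : ℕ) (z : Fin n → ℝ) : Set ℝ :=
  {r | ∃ t : ℝ, 0 < t ∧ r = Real.log (Ncount n z t) / t}

/-- Second-largest entry of a finite vector (equals the largest in case of ties). -/
noncomputable def secondLargest (n : ℕ) (v : Fin n → ℝ) : ℝ :=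
  sInf (Set.range fun i => sSup (v '' {j | j ≠ i}))

/-- Top-two weight gap `D_n(β)`. -/
noncomputable def Dgap (n : ℕ) (z : Fin n → ℝ) (β : ℝ) : ℝ :=
  sSup (Set.range (softmaxP n z β)) - secondLargest n (softmaxP n z β)

/-- Rank gap `G_n(β) = max_{i,j} |p_{n,i}(β) - p_{n,j}(β)|`. -/
noncomputable def Ggap (n : ℕ) (z : Fin n → ℝ) (β : ℝ) : ℝ :=
  sSup {x | ∃ i j : Fin n, x = |softmaxP n z β i - softmaxP n z β j|}

/-- Resolved accumulation scale `Λ_n^{(r)}` (with `sup ∅ = 0`), valued in `ℝ≥0∞`. -/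
noncomputable def resolvedLam (n : ℕ) (z : Fin n → ℝ) (r : ℝ) : ℝ≥0∞ :=
  ⨆ t ∈ {t : ℝ | 0 < t ∧ r < Real.log (Ncount n z t)},
    ENNReal.ofReal ((Real.log (Ncount n z t) - r) / t)

/-- Laplace envelope `S_n(β) = sup_{t ≥ 0} (log N_n(t) - β t)`. -/
noncomputable def Sfun (n : ℕ) (z : Fin n → ℝ) (β : ℝ) : ℝ :=
  sSup {x | ∃ t : ℝ, 0 ≤ t ∧ x = Real.log (Ncount n z t) - β * t}

/-- Rank boundary `B_n^rank(r) = sup {β ≥ 0 : log Z_n(β) ≥ r}`, valued in `ℝ≥0∞`. -/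
noncomputable def rankBoundary (n : ℕ) (z : Fin n → ℝ) (r : ℝ) : ℝ≥0∞ :=
  ⨆ β ∈ {β : ℝ | 0 ≤ β ∧ r ≤ Real.log (Zfun n z β)}, ENNReal.ofReal β

/-- `X_n ≍ (log n)^ξ`. -/
def IsLogAsymp (X : ℕ → ℝ) (ξ : ℝ) : Prop :=
  ∃ c₁ c₂ : ℝ, 0 < c₁ ∧ c₁ ≤ c₂ ∧
    ∀ᶠ n : ℕ in Filter.atTop,
      c₁ * Real.log n ^ ξ ≤ X n ∧ X n ≤ c₂ * Real.log n ^ ξ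

section Stmt5Aux
open Finset

lemma aux_x_exp (x : ℝ) (hx : 0 ≤ x) : x * Real.exp (-x) ≤ Real.exp (-(x/2)) := by
  have h2 : Real.exp (x/2) = Real.exp (x/4) ^ 2 := by
    rw [sq, ← Real.exp_add]; congr 1; ring
  have h1 : x ≤ Real.exp (x/2) := by
    have h := Real.add_one_le_exp (x/4)
    rw [h2]
    have hpos : (0:ℝ) ≤ x/4+1 := by linarith
    have hsq : (x/4+1)^2 ≤ Real.exp (x/4)^2 := by
      apply pow_le_pow_left₀ hpos h
    nlinarith [hsq, sq_nonneg (x/4 - 1)]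
  have hmul : Real.exp (-x) = Real.exp (-(x/2)) * Real.exp (-(x/2)) := by
    rw [← Real.exp_add]; congr 1; ring
  calc x * Real.exp (-x) = (x * Real.exp (-(x/2))) * Real.exp (-(x/2)) := by rw [hmul]; ring
    _ ≤ 1 * Real.exp (-(x/2)) := by
        apply mul_le_mul_of_nonneg_right _ (Real.exp_pos _).le
        rw [Real.exp_neg, ← div_eq_mul_inv, div_le_one (Real.exp_pos _)]
        linarith
    _ = Real.exp (-(x/2)) := one_mul _

lemma aux_tele (m : ℕ) : ∑ i ∈ Finset.range m, (1 / (((i:ℝ)+1) * ((i:ℝ)+2))) ≤ 1 := by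
  have key : ∀ i : ℕ, (1:ℝ) / (((i:ℝ)+1) * ((i:ℝ)+2)) = 1/((i:ℝ)+1) - 1/(((i:ℝ)+1)+1) := by
    intro i
    rw [div_sub_div _ _ (by positivity) (by positivity)]
    ring_nf
  calc ∑ i ∈ Finset.range m, (1 / (((i:ℝ)+1) * ((i:ℝ)+2)))
      = ∑ i ∈ Finset.range m, ((fun j : ℕ => 1/((j:ℝ)+1)) i - (fun j : ℕ => 1/((j:ℝ)+1)) (i+1)) := by
        apply Finset.sum_congr rfl; intro i _
        simp only []
        push_cast
        rw [key i]
    _ = (fun j : ℕ => 1/((j:ℝ)+1)) 0 - (fun j : ℕ => 1/((j:ℝ)+1)) m := Finset.sum_range_sub' _ m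
    _ ≤ 1 := by
        simp only [Nat.cast_zero]
        have : (0:ℝ) ≤ 1/((m:ℝ)+1) := by positivity
        norm_num
        linarith

lemma key_sum (n : ℕ) (F : Fin n → ℝ) (q c0 : ℝ) (hq : 2 ≤ q) (hc0 : 0 ≤ c0)
    (h0 : ∀ k : Fin n, k.val = 0 → F k ≤ c0)
    (h1 : ∀ k : Fin n, 1 ≤ k.val → F k ≤ Real.exp (-(q * Real.log (k.val+1)))) :
    ∑ k : Fin n, F k ≤ c0 + 4 * Real.exp (-(q * Real.log 2)) := by
  set D : ℝ := 4 * Real.exp (-(q * Real.log 2)) with hD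
  have hDpos : 0 < D := by positivity
  set W : ℕ → ℝ := fun i => if i = 0 then c0 else D * (1/((i:ℝ)*((i:ℝ)+1))) with hW
  have hterm : ∀ k : Fin n, F k ≤ W k.val := by
    intro k
    rcases Nat.eq_zero_or_pos k.val with h | h
    · rw [hW]; simp only [h, if_pos rfl]; exact h0 k h
    · have hk1 : (1:ℝ) ≤ (k.val : ℝ) := by exact_mod_cast h
      have hne : k.val ≠ 0 := by omega
      rw [hW]; simp only [if_neg hne]
      refine le_trans (h1 k h) ?_
      set L : ℝ := Real.log ((k.val:ℝ)+1) with hL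
      have hL2 : Real.log 2 ≤ L := by
        apply Real.log_le_log (by norm_num)
        linarith
      have hLpos : 0 < Real.log 2 := Real.log_pos (by norm_num)
      have split : Real.exp (-(q * L)) = Real.exp (-((q-2)*L)) * Real.exp (-(2*L)) := by
        rw [← Real.exp_add]; congr 1; ring
      have b1 : Real.exp (-((q-2)*L)) ≤ D := by
        have : Real.exp (-((q-2)*L)) ≤ Real.exp (-((q-2)*Real.log 2)) := by
          apply Real.exp_le_exp.2
          nlinarith
        refine le_trans this (le_of_eq ?_)
        rw [hD, show -((q-2)*Real.log 2) = (Real.log 2 + Real.log 2) + -(q*Real.log 2) by ring,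
          Real.exp_add, Real.exp_add, Real.exp_log (by norm_num : (0:ℝ) < 2)]
        ring
      have b2 : Real.exp (-(2*L)) ≤ 1/((k.val:ℝ)*((k.val:ℝ)+1)) := by
        have e2 : Real.exp (-(2*L)) = 1/(((k.val:ℝ)+1)*((k.val:ℝ)+1)) := by
          rw [show (2:ℝ)*L = L + L by ring, Real.exp_neg, Real.exp_add, hL,
            Real.exp_log (by positivity), one_div]
        rw [e2]
        apply div_le_div_of_nonneg_left (by norm_num) (by nlinarith) (by nlinarith)
      calc Real.exp (-(q * L)) = Real.exp (-((q-2)*L)) * Real.exp (-(2*L)) := split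
        _ ≤ D * (1/((k.val:ℝ)*((k.val:ℝ)+1))) :=
            mul_le_mul b1 b2 (Real.exp_pos _).le hDpos.le
  calc ∑ k : Fin n, F k ≤ ∑ k : Fin n, W k.val := Finset.sum_le_sum (fun k _ => hterm k)
    _ = ∑ i ∈ Finset.range n, W i := Fin.sum_univ_eq_sum_range W n
    _ ≤ c0 + D := by
        cases n with
        | zero => simp; positivity
        | succ m =>
          rw [Finset.sum_range_succ']
          have h0' : W 0 = c0 := if_pos rfl
          have hrest : ∑ i ∈ Finset.range m, W (i+1)
              = D * ∑ i ∈ Finset.range m, (1/(((i:ℝ)+1)*((i:ℝ)+2))) := by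
            rw [Finset.mul_sum]
            apply Finset.sum_congr rfl; intro i _
            rw [hW]; simp only [Nat.succ_ne_zero, if_neg]
            push_cast; ring_nf
          rw [h0', hrest]
          have := aux_tele m
          nlinarith

lemma ncount_eq (n : ℕ) (z : Fin n → ℝ) (t : ℝ) :
    Ncount n z t = (Finset.univ.filter (fun j => gap n z j ≤ t)).card := by
  classical
  rw [Ncount, ← Set.ncard_coe_finset]
  congr 1
  ext j
  simp

lemma ncount_mono (n : ℕ) (z : Fin n → ℝ) {s t : ℝ} (hst : s ≤ t) :
    Ncount n z s ≤ Ncount n z t := by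
  classical
  rw [ncount_eq, ncount_eq]
  apply Finset.card_le_card
  intro j hj
  simp only [Finset.mem_filter, Finset.mem_univ, true_and] at hj ⊢
  linarith

lemma log_ncount_le {n : ℕ} {z : Fin n → ℝ} {Λ : ℝ} (hlub : IsLUB (lamSet n z) Λ)
    {t : ℝ} (ht : 0 < t) : Real.log (Ncount n z t) ≤ Λ * t := by
  have hmem : Real.log (Ncount n z t) / t ∈ lamSet n z := ⟨t, ht, rfl⟩
  have h2 := hlub.1 hmem
  rw [div_le_iff₀ ht] at h2
  linarith

lemma gap_nonneg {n : ℕ} (z : Fin n → ℝ) (j : Fin n) : 0 ≤ gap n z j := by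
  have : z j ≤ zmax n z := le_csSup (Set.finite_range z).bddAbove ⟨j, rfl⟩
  simp only [gap]
  linarith

lemma exists_gap_zero {n : ℕ} (hn : 0 < n) (z : Fin n → ℝ) : ∃ m : Fin n, gap n z m = 0 := by
  have hne : (Set.range z).Nonempty := Set.range_nonempty_iff_nonempty.2 ⟨⟨0, hn⟩⟩
  obtain ⟨m, hm⟩ := hne.csSup_mem (Set.finite_range z)
  exact ⟨m, by simp [gap, zmax, hm]⟩

lemma main_bounds (n : ℕ) (z : Fin n → ℝ) (Λ β : ℝ) (hn : 0 < n) (hβ : 0 < β)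
    (hΛ : 0 < Λ) (hlub : IsLUB (lamSet n z) Λ) (hs : 4 ≤ β / Λ) :
    (1 ≤ Zfun n z β ∧ Zfun n z β ≤ 1 + 4 * Real.exp (-(β/Λ * Real.log 2))) ∧
    (0 ≤ entropyH n z β ∧ entropyH n z β ≤
      4 * Real.exp (-(β/Λ * Real.log 2)) + 4 * Real.exp (-(β/Λ/2 * Real.log 2))) := by
  classical
  obtain ⟨m, hm⟩ := exists_gap_zero hn z
  set σ : Equiv.Perm (Fin n) := Tuple.sort (gap n z) with hσ
  set h : Fin n → ℝ := gap n z ∘ σ with hh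
  have hmono : Monotone h := Tuple.monotone_sort (gap n z)
  have hpos : ∀ k, 0 ≤ h k := fun k => gap_nonneg z (σ k)
  have hzero : ∀ k : Fin n, k.val = 0 → h k = 0 := by
    intro k hk
    have hle : k ≤ σ.symm m := by rw [Fin.le_def, hk]; omega
    have h1 : h k ≤ h (σ.symm m) := hmono hle
    have hm' : h (σ.symm m) = 0 := by
      rw [hh]
      simp only [Function.comp_apply, Equiv.apply_symm_apply, hm]
    have := hpos k
    linarith
  have hcount : ∀ k : Fin n, (k.val + 1 : ℕ) ≤ Ncount n z (h k) := by
    intro k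
    rw [ncount_eq]
    have hsub : (Finset.Iic k).image σ ⊆ Finset.univ.filter (fun j => gap n z j ≤ h k) := by
      intro j hj
      simp only [Finset.mem_image, Finset.mem_Iic] at hj
      obtain ⟨i, hik, rfl⟩ := hj
      simp only [Finset.mem_filter, Finset.mem_univ, true_and]
      exact hmono hik
    calc k.val + 1 = (Finset.Iic k).card := (Fin.card_Iic k).symm
      _ = ((Finset.Iic k).image σ).card := (Finset.card_image_of_injective _ σ.injective).symm
      _ ≤ _ := Finset.card_le_card hsub
  have hl2 : (0:ℝ) < Real.log 2 := Real.log_pos (by norm_num)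
  have hposk : ∀ k : Fin n, 1 ≤ k.val → 0 < h k := by
    intro k hk
    rcases lt_or_eq_of_le (hpos k) with h' | h'
    · exact h'
    · exfalso
      have h0 : h k = 0 := h'.symm
      have h2 : (2:ℕ) ≤ Ncount n z (h k) := le_trans (by omega) (hcount k)
      set t : ℝ := Real.log 2 / (2*Λ) with ht
      have htpos : 0 < t := div_pos hl2 (by linarith)
      have h2' : (2:ℕ) ≤ Ncount n z t :=
        le_trans h2 (ncount_mono n z (by rw [h0]; exact htpos.le))
      have hlog : Real.log 2 ≤ Real.log (Ncount n z t) := by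
        apply Real.log_le_log (by norm_num)
        exact_mod_cast h2'
      have hup := log_ncount_le hlub htpos
      have heq : Λ * t = Real.log 2 / 2 := by
        rw [ht]; field_simp
      rw [heq] at hup
      linarith
  have hlogk : ∀ k : Fin n, 1 ≤ k.val → β/Λ * Real.log ((k.val:ℝ)+1) ≤ β * h k := by
    intro k hk
    have h1 : Real.log ((k.val:ℝ)+1) ≤ Real.log (Ncount n z (h k)) := by
      apply Real.log_le_log (by positivity)
      have := hcount k
      exact_mod_cast this
    have h2 := log_ncount_le hlub (hposk k hk)
    have h3 : Real.log ((k.val:ℝ)+1) ≤ Λ * h k := le_trans h1 h2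
    have hβΛ : (0:ℝ) < β/Λ := by positivity
    calc β/Λ * Real.log ((k.val:ℝ)+1) ≤ β/Λ * (Λ * h k) :=
          mul_le_mul_of_nonneg_left h3 hβΛ.le
      _ = β * h k := by field_simp
  have hZeq : Zfun n z β = ∑ k : Fin n, Real.exp (-(β * h k)) := by
    rw [Zfun]
    exact (Equiv.sum_comp σ (fun j => Real.exp (-(β * gap n z j)))).symm
  have hZ1 : 1 ≤ Zfun n z β := by
    rw [hZeq]
    have hk0 : Real.exp (-(β * h ⟨0, hn⟩)) = 1 := by
      rw [hzero ⟨0, hn⟩ rfl]; simp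
    calc (1:ℝ) = Real.exp (-(β * h ⟨0, hn⟩)) := hk0.symm
      _ ≤ ∑ k : Fin n, Real.exp (-(β * h k)) :=
          Finset.single_le_sum (f := fun k : Fin n => Real.exp (-(β * h k)))
            (fun i _ => (Real.exp_pos _).le) (Finset.mem_univ (⟨0, hn⟩ : Fin n))
  have hZup : Zfun n z β ≤ 1 + 4 * Real.exp (-(β/Λ * Real.log 2)) := by
    rw [hZeq]
    apply key_sum n _ (β/Λ) 1 (by linarith) (by norm_num)
    · intro k hk
      rw [hzero k hk]; simp
    · intro k hk
      apply Real.exp_le_exp.2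
      have := hlogk k hk
      push_cast
      linarith
  have hZpos : 0 < Zfun n z β := lt_of_lt_of_le one_pos hZ1
  have hZfac : Zfun n z β = Real.exp (-(β * zmax n z)) * ∑ ℓ : Fin n, Real.exp (β * z ℓ) := by
    rw [Zfun, Finset.mul_sum]
    apply Finset.sum_congr rfl
    intro ℓ _
    rw [← Real.exp_add, gap]
    congr 1; ring
  have hp : ∀ j, softmaxP n z β j = Real.exp (-(β * gap n z j)) / Zfun n z β := by
    intro j
    rw [softmaxP, hZfac,
      show Real.exp (-(β * gap n z j)) = Real.exp (-(β * zmax n z)) * Real.exp (β * z j) by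
        rw [← Real.exp_add, gap]; congr 1; ring,
      mul_div_mul_left _ _ (Real.exp_ne_zero _)]
  have hppos : ∀ j, 0 < softmaxP n z β j := by
    intro j; rw [hp]; positivity
  have hsum1 : ∑ j : Fin n, softmaxP n z β j = 1 := by
    calc ∑ j : Fin n, softmaxP n z β j
        = ∑ j : Fin n, Real.exp (-(β * gap n z j)) / Zfun n z β := by
          apply Finset.sum_congr rfl; intro j _; rw [hp]
      _ = (∑ j : Fin n, Real.exp (-(β * gap n z j))) / Zfun n z β := by
          rw [Finset.sum_div]
      _ = Zfun n z β / Zfun n z β := rfl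
      _ = 1 := div_self (ne_of_gt hZpos)
  have hlogZ0 : 0 ≤ Real.log (Zfun n z β) := Real.log_nonneg hZ1
  have hlogp : ∀ j, Real.log (softmaxP n z β j)
      = -(β * gap n z j) - Real.log (Zfun n z β) := by
    intro j
    rw [hp, Real.log_div (Real.exp_ne_zero _) (ne_of_gt hZpos), Real.log_exp]
  have hH : entropyH n z β
      = (∑ j : Fin n, softmaxP n z β j * (β * gap n z j)) + Real.log (Zfun n z β) := by
    rw [entropyH]
    have hterm : ∀ j ∈ Finset.univ, softmaxP n z β j * Real.log (softmaxP n z β j)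
        = -(softmaxP n z β j * (β * gap n z j)) - softmaxP n z β j * Real.log (Zfun n z β) := by
      intro j _; rw [hlogp j]; ring
    rw [Finset.sum_congr rfl hterm, Finset.sum_sub_distrib, Finset.sum_neg_distrib,
      ← Finset.sum_mul, hsum1, one_mul]
    ring
  have hHpos : 0 ≤ entropyH n z β := by
    rw [hH]
    have hnn : 0 ≤ ∑ j : Fin n, softmaxP n z β j * (β * gap n z j) :=
      Finset.sum_nonneg (fun j _ =>
        mul_nonneg (hppos j).le (mul_nonneg hβ.le (gap_nonneg z j)))
    linarith
  have hfirst : (∑ j : Fin n, softmaxP n z β j * (β * gap n z j))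
      ≤ ∑ k : Fin n, (β * h k) * Real.exp (-(β * h k)) := by
    have step1 : ∀ j ∈ Finset.univ, softmaxP n z β j * (β * gap n z j)
        ≤ (β * gap n z j) * Real.exp (-(β * gap n z j)) := by
      intro j _
      rw [hp]
      have h1 : Real.exp (-(β * gap n z j)) / Zfun n z β ≤ Real.exp (-(β * gap n z j)) :=
        div_le_self (Real.exp_pos _).le hZ1
      have hg : 0 ≤ β * gap n z j := mul_nonneg hβ.le (gap_nonneg z j)
      calc Real.exp (-(β * gap n z j)) / Zfun n z β * (β * gap n z j)
          ≤ Real.exp (-(β * gap n z j)) * (β * gap n z j) :=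
            mul_le_mul_of_nonneg_right h1 hg
        _ = (β * gap n z j) * Real.exp (-(β * gap n z j)) := by ring
    refine le_trans (Finset.sum_le_sum step1) (le_of_eq ?_)
    exact (Equiv.sum_comp σ (fun j => (β * gap n z j) * Real.exp (-(β * gap n z j)))).symm
  have hsecond : ∑ k : Fin n, (β * h k) * Real.exp (-(β * h k))
      ≤ 0 + 4 * Real.exp (-(β/Λ/2 * Real.log 2)) := by
    apply key_sum n _ (β/Λ/2) 0 (by linarith) le_rfl
    · intro k hk; rw [hzero k hk]; simp
    · intro k hk
      have hx : 0 ≤ β * h k := mul_nonneg hβ.le (hpos k)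
      refine le_trans (aux_x_exp _ hx) (Real.exp_le_exp.2 ?_)
      have := hlogk k hk
      push_cast
      linarith
  have hlogZle : Real.log (Zfun n z β) ≤ 4 * Real.exp (-(β/Λ * Real.log 2)) := by
    have := Real.log_le_sub_one_of_pos hZpos
    linarith
  refine ⟨⟨hZ1, hZup⟩, hHpos, ?_⟩
  rw [hH]
  linarith

end Stmt5Aux

theorem stmt5 (z : (n : ℕ) → Fin n → ℝ) (Λ β : ℕ → ℝ)
    (hβ : ∀ n, 0 < β n)
    (hΛ : ∀ᶠ n in atTop, IsLUB (lamSet n (z n)) (Λ n))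
    (hsup : Tendsto (fun n => β n / Λ n) atTop atTop) :
    Tendsto (fun n => Zfun n (z n) (β n)) atTop (nhds 1) ∧
      Tendsto (fun n => entropyH n (z n) (β n)) atTop (nhds 0) := by
  have hq4 : ∀ᶠ n in atTop, 4 ≤ β n / Λ n := hsup.eventually_ge_atTop 4
  have hn1 : ∀ᶠ n : ℕ in atTop, 0 < n := eventually_gt_atTop 0
  have hev : ∀ᶠ n in atTop,
      (1 ≤ Zfun n (z n) (β n) ∧
        Zfun n (z n) (β n) ≤ 1 + 4 * Real.exp (-(β n/Λ n * Real.log 2))) ∧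
      (0 ≤ entropyH n (z n) (β n) ∧ entropyH n (z n) (β n) ≤
        4 * Real.exp (-(β n/Λ n * Real.log 2)) + 4 * Real.exp (-(β n/Λ n/2 * Real.log 2))) := by
    filter_upwards [hq4, hn1, hΛ] with n h4 hn hlub
    have hΛpos : 0 < Λ n := by
      by_contra hc
      push_neg at hc
      rcases lt_or_eq_of_le hc with hlt | heq
      · have : β n / Λ n < 0 := div_neg_of_pos_of_neg (hβ n) hlt
        linarith
      · rw [heq, div_zero] at h4
        linarith
    exact main_bounds n (z n) (Λ n) (β n) hn (hβ n) hΛpos hlub h4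
  have hA : Tendsto (fun n => 4 * Real.exp (-(β n/Λ n * Real.log 2))) atTop (nhds 0) := by
    have h1 : Tendsto (fun n => β n/Λ n * Real.log 2) atTop atTop :=
      Tendsto.atTop_mul_const (Real.log_pos (by norm_num)) hsup
    have h2 : Tendsto (fun n => -(β n/Λ n * Real.log 2)) atTop atBot :=
      tendsto_neg_atTop_atBot.comp h1
    have h3 := Real.tendsto_exp_atBot.comp h2
    have h4 := h3.const_mul (4:ℝ)
    simpa using h4
  have hB : Tendsto (fun n => 4 * Real.exp (-(β n/Λ n/2 * Real.log 2))) atTop (nhds 0) := by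
    have h0 : Tendsto (fun n => β n/Λ n/2) atTop atTop :=
      Tendsto.atTop_div_const (by norm_num) hsup
    have h1 : Tendsto (fun n => β n/Λ n/2 * Real.log 2) atTop atTop :=
      Tendsto.atTop_mul_const (Real.log_pos (by norm_num)) h0
    have h2 : Tendsto (fun n => -(β n/Λ n/2 * Real.log 2)) atTop atBot :=
      tendsto_neg_atTop_atBot.comp h1
    have h3 := Real.tendsto_exp_atBot.comp h2
    have h4 := h3.const_mul (4:ℝ)
    simpa using h4
  constructor
  · apply tendsto_of_tendsto_of_tendsto_of_le_of_le'
      (tendsto_const_nhds : Tendsto (fun _ : ℕ => (1:ℝ)) atTop (nhds 1))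
      (show Tendsto (fun n => 1 + 4 * Real.exp (-(β n/Λ n * Real.log 2))) atTop (nhds 1) by
        simpa using (tendsto_const_nhds (x := (1:ℝ)) (f := atTop)).add hA)
    · filter_upwards [hev] with n hb; exact hb.1.1
    · filter_upwards [hev] with n hb; exact hb.1.2
  · apply tendsto_of_tendsto_of_tendsto_of_le_of_le'
      (tendsto_const_nhds : Tendsto (fun _ : ℕ => (0:ℝ)) atTop (nhds 0))
      (show Tendsto (fun n => 4 * Real.exp (-(β n/Λ n * Real.log 2))
          + 4 * Real.exp (-(β n/Λ n/2 * Real.log 2))) atTop (nhds 0) by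
        simpa using hA.add hB)
    · filter_upwards [hev] with n hb; exact hb.2.1
    · filter_upwards [hev] with n hb; exact hb.2.2
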